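/- The set S := {t ∈ (0,1) : ∃ C ≥ 1, N ∈ ℕ, ∀ n ≥ N, C^{-1} ≤ D_n^+(t)/D_n^-(t) ≤ C} is σ-porous in the interval I = [0,1] with the Euclidean metric; in particular S is meager and has Lebesgue measure zero. -/

import Mathlib

set_option maxHeartbeats 1000000


open scoped ENNReal

/-- Wormhole heights of order `n` in Laakso space. -/
def Jset (n : ℕ) : Set ℝ :=
  {x | ∃ m : ℕ → ℕ, (∀ i, m i ≤ 2) ∧ 0 < m n ∧ x = ∑ i ∈ Finset.Icc 1 n, (m i : ℝ) / 3 ^ i}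

lemma base3 (a : ℕ) : ∀ n : ℕ, ∑ j ∈ Finset.range n, (a / 3 ^ j % 3) * 3 ^ j = a % 3 ^ n := by
  intro n
  induction n with
  | zero => simp [Nat.mod_one]
  | succ n ih =>
    rw [Finset.sum_range_succ, ih]
    have h2 : a / 3 ^ n % 3 = a % 3 ^ (n + 1) / 3 ^ n := by
      rw [(Nat.mod_mul_right_div_self a (3^n) 3).symm, pow_succ]
    have h1 : a % 3 ^ (n + 1) % 3 ^ n = a % 3 ^ n :=
      Nat.mod_mod_of_dvd _ (pow_dvd_pow 3 (Nat.le_succ n))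
    rw [h2, ← h1]
    exact Nat.mod_add_div' _ _

/-- converting digit sums to a single fraction -/
lemma sum_digits_real (n : ℕ) (m : ℕ → ℕ) :
    ∑ i ∈ Finset.Icc 1 n, (m i : ℝ) / 3 ^ i
      = ((∑ i ∈ Finset.Icc 1 n, m i * 3 ^ (n - i) : ℕ) : ℝ) / 3 ^ n := by
  push_cast
  rw [Finset.sum_div]
  refine Finset.sum_congr rfl fun i hi => ?_
  have hin : i ≤ n := (Finset.mem_Icc.mp hi).2
  have h3 : (3 : ℝ) ^ (n - i) * 3 ^ i = 3 ^ n := by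
    rw [← pow_add, Nat.sub_add_cancel hin]
  field_simp
  nlinarith [h3, pow_pos (by norm_num : (0:ℝ) < 3) i, pow_pos (by norm_num : (0:ℝ) < 3) (n-i)]

lemma Jset_nat {n : ℕ} {x : ℝ} (hx : x ∈ Jset n) : ∃ z : ℕ, x = (z : ℝ) / 3 ^ n := by
  obtain ⟨m, _, _, rfl⟩ := hx
  exact ⟨_, sum_digits_real n m⟩

lemma mem_Jset {n a : ℕ} (ha1 : 1 ≤ a) (ha2 : a < 3 ^ n) (ha3 : ¬ 3 ∣ a) :
    (a : ℝ) / 3 ^ n ∈ Jset n := by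
  refine ⟨fun i => a / 3 ^ (n - i) % 3, fun i => Nat.lt_succ_iff.mp (Nat.mod_lt _ (by norm_num)), ?_, ?_⟩
  · simpa using Nat.pos_of_ne_zero fun h => ha3 (Nat.dvd_of_mod_eq_zero h)
  · rw [sum_digits_real]
    congr 1
    have key : ∑ i ∈ Finset.Icc 1 n, a / 3 ^ (n - i) % 3 * 3 ^ (n - i)
        = ∑ j ∈ Finset.range n, a / 3 ^ j % 3 * 3 ^ j := by
      refine Finset.sum_nbij' (fun i => n - i) (fun j => n - j) ?_ ?_ ?_ ?_ ?_
      · intro i hi; simp only [Finset.mem_Icc] at hi; simp only [Finset.mem_range]; omega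
      · intro j hj; simp only [Finset.mem_range] at hj; simp only [Finset.mem_Icc]; omega
      · intro i hi; simp only [Finset.mem_Icc] at hi; show n - (n - i) = i; omega
      · intro j hj; simp only [Finset.mem_range] at hj; show n - (n - j) = j; omega
      · intro i _; rfl
    rw [key, base3, Nat.mod_eq_of_lt ha2]


/-- `Dplus n t = inf {s > 0 : t + s ∈ J_n}`, with `inf ∅ = ∞`. -/
noncomputable def Dplus (n : ℕ) (t : ℝ) : ℝ≥0∞ :=
  ⨅ (s : ℝ) (_ : 0 < s ∧ t + s ∈ Jset n), ENNReal.ofReal s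

/-- `Dminus n t = inf {s > 0 : t - s ∈ J_n}`, with `inf ∅ = ∞`. -/
noncomputable def Dminus (n : ℕ) (t : ℝ) : ℝ≥0∞ :=
  ⨅ (s : ℝ) (_ : 0 < s ∧ t - s ∈ Jset n), ENNReal.ofReal s

def Sset (k N : ℕ) : Set ℝ :=
  {t | t ∈ Set.Ioo (0 : ℝ) 1 ∧ ∀ n, N ≤ n →
    ((k : ℝ) + 1)⁻¹ ≤ (Dplus n t).toReal / (Dminus n t).toReal ∧
    (Dplus n t).toReal / (Dminus n t).toReal ≤ (k : ℝ) + 1}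

lemma hole (k N : ℕ) {x δ : ℝ} (hx0 : 0 < x) (hx1 : x < 1) (hδ : 0 < δ) :
    ∃ y : ℝ, x < y ∧ y < 1 ∧ y - x < δ ∧
      ∀ t : ℝ, |t - y| < (24 * ((k : ℝ) + 1))⁻¹ * (y - x) → t ∉ Sset k N := by
  set C : ℝ := (k : ℝ) + 1 with hCdef
  have hC : 1 ≤ C := by
    have : (0:ℝ) ≤ (k:ℝ) := Nat.cast_nonneg k
    rw [hCdef]; linarith
  have hC0 : 0 < C := by linarith
  -- choose the scale m
  obtain ⟨m0, hm0⟩ := pow_unbounded_of_one_lt (max (3 / δ) (3 / (1 - x))) (by norm_num : (1:ℝ) < 3)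
  set m : ℕ := max m0 N with hmdef
  have hmN : N ≤ m := le_max_right _ _
  have h3m : max (3 / δ) (3 / (1 - x)) < (3:ℝ) ^ m :=
    lt_of_lt_of_le hm0 (pow_le_pow_right₀ (by norm_num) (le_max_left _ _))
  have h3mpos : (0:ℝ) < 3 ^ m := by positivity
  set g : ℝ := ((3:ℝ) ^ m)⁻¹ with hgdef
  have hgpos : 0 < g := by positivity
  have hgδ : 3 * g < δ := by
    have h1 : 3 / δ < (3:ℝ) ^ m := lt_of_le_of_lt (le_max_left _ _) h3m
    rw [div_lt_iff₀ hδ] at h1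
    calc 3 * g = 3 / 3 ^ m := by rw [hgdef, div_eq_mul_inv]
    _ < δ := by rw [div_lt_iff₀ h3mpos]; linarith
  have hgx : x + 3 * g < 1 := by
    have h1 : 3 / (1 - x) < (3:ℝ) ^ m := lt_of_le_of_lt (le_max_right _ _) h3m
    rw [div_lt_iff₀ (by linarith : (0:ℝ) < 1 - x)] at h1
    have : 3 * g < 1 - x := by
      calc 3 * g = 3 / 3 ^ m := by rw [hgdef, div_eq_mul_inv]
      _ < 1 - x := by rw [div_lt_iff₀ h3mpos]; linarith
    linarith
  -- choose the wormhole j = a / 3^m just above x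
  set b : ℕ := ⌊(3:ℝ) ^ m * x⌋₊ with hbdef
  have hbx : (b : ℝ) ≤ 3 ^ m * x := Nat.floor_le (by positivity)
  have hxb : (3:ℝ) ^ m * x < b + 1 := Nat.lt_floor_add_one _
  set a : ℕ := if 3 ∣ (b + 1) then b + 2 else b + 1 with hadef
  have ha3 : ¬ 3 ∣ a := by
    rw [hadef]; split
    · omega
    · assumption
  have ha1 : 1 ≤ a := by rw [hadef]; split <;> omega
  have hab : b + 1 ≤ a ∧ a ≤ b + 2 := by rw [hadef]; split <;> omega
  have haR : (a : ℝ) ≤ 3 ^ m * x + 2 := by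
    have := hab.2
    have : (a:ℝ) ≤ (b:ℝ) + 2 := by exact_mod_cast this
    linarith
  have haR2 : (3:ℝ) ^ m * x < a := by
    have : ((b:ℝ) + 1) ≤ a := by exact_mod_cast hab.1
    linarith
  have ha2 : a < 3 ^ m := by
    have h1 : (3:ℝ) ^ m * x < 3 ^ m * 1 - 3 := by
      have := mul_lt_mul_of_pos_left hgx h3mpos
      have h3 : (3:ℝ) ^ m * (3 * g) = 3 := by
        rw [hgdef]; field_simp
      nlinarith
    have : (a : ℝ) < (3:ℝ)^m := by push_cast; nlinarith
    exact_mod_cast this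
  set j : ℝ := (a : ℝ) / 3 ^ m with hjdef
  have hj : j ∈ Jset m := mem_Jset ha1 ha2 ha3
  have hxj : x < j := by
    rw [hjdef, lt_div_iff₀ h3mpos]; linarith
  have hjx : j ≤ x + 2 * g := by
    rw [hjdef, div_le_iff₀ h3mpos]
    have : (x + 2 * g) * 3 ^ m = 3 ^ m * x + 2 := by
      rw [hgdef]; field_simp
    linarith
  set ε : ℝ := g / (4 * C) with hεdef
  have hεpos : 0 < ε := by positivity
  have hεg : ε < g := by
    rw [hεdef, div_lt_iff₀ (by positivity)]
    nlinarith
  refine ⟨j + ε / 2, by linarith, by linarith, by linarith, ?_⟩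
  intro t ht htS
  -- the ball is inside the hole (j, j + ε)
  have hρ : (24 * C)⁻¹ * (j + ε / 2 - x) < ε / 2 := by
    have h1 : j + ε / 2 - x < 3 * g := by linarith
    have h2 : (24 * C)⁻¹ * (j + ε / 2 - x) < (24 * C)⁻¹ * (3 * g) :=
      mul_lt_mul_of_pos_left h1 (by positivity)
    have h3 : (24 * C)⁻¹ * (3 * g) = ε / 2 := by
      rw [hεdef]; field_simp; ring
    linarith
  rw [abs_lt] at ht
  have htj : j < t := by linarith
  have htjε : t < j + ε := by linarith
  have hjg : j + g = ((a : ℝ) + 1) / 3 ^ m := by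
    rw [hjdef, hgdef]; field_simp
  -- compute Dminus m t
  have hDm : Dminus m t = ENNReal.ofReal (t - j) := by
    apply le_antisymm
    · have hmem : 0 < t - j ∧ t - (t - j) ∈ Jset m := ⟨by linarith, by simpa using hj⟩
      exact iInf₂_le (t - j) hmem
    · refine le_iInf fun s => le_iInf fun hs => ?_
      obtain ⟨hs0, hsJ⟩ := hs
      obtain ⟨z, hz⟩ := Jset_nat hsJ
      have h1 : (z : ℝ) / 3 ^ m < ((a : ℝ) + 1) / 3 ^ m := by
        rw [← hz, ← hjg]; linarith
      rw [div_lt_div_iff₀ h3mpos h3mpos] at h1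
      have h2 : (z : ℝ) < (a : ℝ) + 1 := lt_of_mul_lt_mul_right h1 (le_of_lt h3mpos)
      have hza : z ≤ a := by
        have : (z : ℝ) < ((a + 1 : ℕ) : ℝ) := by push_cast; linarith
        have : z < a + 1 := by exact_mod_cast this
        omega
      have hts : t - s ≤ j := by
        rw [hz, hjdef]
        have hza' : (z : ℝ) ≤ (a : ℝ) := by exact_mod_cast hza
        gcongr
      exact ENNReal.ofReal_le_ofReal (by linarith)
  -- lower bound for Dplus m t
  have hDp : ENNReal.ofReal (j + g - t) ≤ Dplus m t := by
    refine le_iInf fun s => le_iInf fun hs => ?_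
    obtain ⟨hs0, hsJ⟩ := hs
    obtain ⟨z, hz⟩ := Jset_nat hsJ
    have h1 : (a : ℝ) / 3 ^ m < (z : ℝ) / 3 ^ m := by
      rw [← hz, ← hjdef]; linarith
    rw [div_lt_div_iff₀ h3mpos h3mpos] at h1
    have h2 : (a : ℝ) < (z : ℝ) := lt_of_mul_lt_mul_right h1 (le_of_lt h3mpos)
    have hza : a + 1 ≤ z := by
      have : a < z := by exact_mod_cast h2
      omega
    have hts : j + g ≤ t + s := by
      rw [hz, hjg]
      have hza' : ((a : ℝ) + 1) ≤ (z : ℝ) := by push_cast; exact_mod_cast hza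
      gcongr
    exact ENNReal.ofReal_le_ofReal (by linarith)
  -- derive the contradiction with the ratio bounds
  obtain ⟨hrlo, hrhi⟩ := htS.2 m hmN
  have htoRm : (Dminus m t).toReal = t - j := by
    rw [hDm, ENNReal.toReal_ofReal (by linarith)]
  by_cases htop : Dplus m t = ⊤
  · rw [htop] at hrlo
    simp only [ENNReal.toReal_top, zero_div] at hrlo
    have : (0:ℝ) < C⁻¹ := by positivity
    rw [← hCdef] at hrlo
    linarith
  · have hPt : j + g - t ≤ (Dplus m t).toReal := by
      have := ENNReal.toReal_mono htop hDp
      rwa [ENNReal.toReal_ofReal (by linarith)] at this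
    rw [← hCdef] at hrhi
    rw [htoRm] at hrhi
    have htj0 : 0 < t - j := by linarith
    have hup : (Dplus m t).toReal ≤ C * (t - j) := by
      rw [div_le_iff₀ htj0] at hrhi; linarith
    -- j + g - t ≥ g - ε = (4C - 1) ε > C ε > C (t - j)
    have hge : g - ε ≤ j + g - t := by linarith
    have hgε : g = 4 * C * ε := by
      rw [hεdef]; field_simp
    nlinarith [hεpos, htjε, htj0]


/-- A set `P` in a metric space is porous if there is `0 < ρ < 1` such that every `x ∈ P`
and every `δ > 0` admit a point `y ≠ x` with `dist y x < δ` whose ball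
`B(y, ρ · dist y x)` misses `P`. -/
def Porous {X : Type*} [MetricSpace X] (P : Set X) : Prop :=
  ∃ ρ : ℝ, 0 < ρ ∧ ρ < 1 ∧ ∀ x ∈ P, ∀ δ > (0 : ℝ), ∃ y : X, y ≠ x ∧ dist y x < δ ∧
    Metric.ball y (ρ * dist y x) ∩ P = ∅

/-- A set is σ-porous if it is a countable union of porous sets. -/
def SigmaPorous {X : Type*} [MetricSpace X] (P : Set X) : Prop :=
  ∃ f : ℕ → Set X, (∀ n, Porous (f n)) ∧ P = ⋃ n, f n

/-- The condition defining the set `S ⊆ (0,1)`. -/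
def Scond (t : ℝ) : Prop :=
  t ∈ Set.Ioo (0 : ℝ) 1 ∧ ∃ C : ℝ, 1 ≤ C ∧ ∃ N : ℕ, ∀ n, N ≤ n →
    C⁻¹ ≤ (Dplus n t).toReal / (Dminus n t).toReal ∧
    (Dplus n t).toReal / (Dminus n t).toReal ≤ C


lemma rho_pos (k : ℕ) : 0 < (24 * ((k : ℝ) + 1))⁻¹ := by positivity

lemma rho_lt_one (k : ℕ) : (24 * ((k : ℝ) + 1))⁻¹ < 1 := by
  rw [inv_lt_one_iff₀]
  right
  have : (0:ℝ) ≤ (k:ℝ) := Nat.cast_nonneg k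
  linarith

lemma porous_Sset_real (k N : ℕ) : Porous (Sset k N) := by
  refine ⟨(24 * ((k : ℝ) + 1))⁻¹, rho_pos k, rho_lt_one k, ?_⟩
  intro x hx δ hδ
  obtain ⟨y, hxy, hy1, hyδ, hy⟩ := hole k N hx.1.1 hx.1.2 hδ
  have hd : dist y x = y - x := by
    rw [Real.dist_eq, abs_of_pos (by linarith)]
  refine ⟨y, by intro h; rw [h] at hxy; exact lt_irrefl x hxy, by rw [hd]; linarith, ?_⟩
  rw [Set.eq_empty_iff_forall_notMem]
  intro t ⟨htb, htS⟩
  rw [Metric.mem_ball, Real.dist_eq, hd] at htb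
  exact hy t htb htS

lemma porous_Sset_sub (k N : ℕ) :
    Porous {t : Set.Icc (0:ℝ) 1 | (t : ℝ) ∈ Sset k N} := by
  refine ⟨(24 * ((k : ℝ) + 1))⁻¹, rho_pos k, rho_lt_one k, ?_⟩
  intro x hx δ hδ
  obtain ⟨y, hxy, hy1, hyδ, hy⟩ := hole k N hx.1.1 hx.1.2 hδ
  have hy0 : 0 < y := lt_trans hx.1.1 hxy
  refine ⟨⟨y, le_of_lt hy0, le_of_lt hy1⟩, ?_, ?_, ?_⟩
  · intro h
    rw [Subtype.ext_iff] at h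
    simp only at h
    rw [h] at hxy; exact lt_irrefl _ hxy
  · rw [Subtype.dist_eq, Real.dist_eq]
    show |y - (x:ℝ)| < δ
    rw [abs_of_pos (sub_pos.mpr hxy)]
    exact hyδ
  · rw [Set.eq_empty_iff_forall_notMem]
    intro t ⟨htb, htS⟩
    apply hy t ?_ htS
    rw [Metric.mem_ball, Subtype.dist_eq, Real.dist_eq, Subtype.dist_eq, Real.dist_eq] at htb
    have h2 : |y - (x:ℝ)| = y - (x:ℝ) := abs_of_pos (sub_pos.mpr hxy)
    rw [show ((⟨y, le_of_lt hy0, le_of_lt hy1⟩ : Set.Icc (0:ℝ) 1) : ℝ) = y from rfl] at htb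
    rw [h2] at htb
    exact htb

open Metric in
lemma Porous.isNowhereDense {X : Type*} [MetricSpace X] {P : Set X} (h : Porous P) :
    IsNowhereDense P := by
  obtain ⟨ρ, hρ0, hρ1, hP⟩ := h
  rw [IsNowhereDense, Set.eq_empty_iff_forall_notMem]
  intro x0 hx0
  obtain ⟨r, hr0, hball⟩ := Metric.isOpen_iff.mp isOpen_interior x0 hx0
  have hballc : ball x0 r ⊆ closure P := hball.trans interior_subset
  have hx0c : x0 ∈ closure P := interior_subset hx0
  obtain ⟨x, hxP, hxd⟩ := Metric.mem_closure_iff.mp hx0c (r / 4) (by linarith)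
  obtain ⟨y, hyx, hyd, hy⟩ := hP x hxP (r / 4) (by linarith)
  have hd0 : 0 < dist y x := dist_pos.mpr hyx
  have hsub : ball y (ρ * dist y x) ⊆ ball x0 r := by
    intro t ht
    rw [mem_ball] at ht ⊢
    have h1 : dist t x0 ≤ dist t y + dist y x + dist x x0 := dist_triangle4 t y x x0
    have h2 : ρ * dist y x < dist y x := by nlinarith
    rw [dist_comm x x0] at h1
    nlinarith
  have hyc : y ∈ closure P := hballc (hsub (mem_ball_self (by positivity)))
  obtain ⟨z, hzP, hzd⟩ := Metric.mem_closure_iff.mp hyc (ρ * dist y x) (by positivity)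
  have : z ∈ ball y (ρ * dist y x) ∩ P := ⟨by rwa [mem_ball, dist_comm], hzP⟩
  rw [hy] at this
  exact this

open Metric MeasureTheory Filter Topology in
lemma Porous.volume_zero {P : Set ℝ} (h : Porous P) : volume P = 0 := by
  obtain ⟨ρ, hρ0, hρ1, hP⟩ := h
  have hd := Besicovitch.ae_tendsto_measure_inter_div volume P
  set f : ℝ → (ℝ → ℝ≥0∞) := fun x r => volume (P ∩ closedBall x r) / volume (closedBall x r)
    with hf
  have key : ∀ x ∈ P, ¬ Tendsto (f x) (𝓝[>] 0) (𝓝 1) := by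
    intro x hx htend
    set aa : ℝ≥0∞ := ENNReal.ofReal (1 - ρ / (1 + ρ)) with haa
    have hrr : 0 < ρ / (1 + ρ) := by positivity
    have haa1 : aa < 1 := by
      rw [haa]
      calc ENNReal.ofReal (1 - ρ / (1 + ρ)) < ENNReal.ofReal 1 := by
            rw [ENNReal.ofReal_lt_ofReal_iff (by norm_num)]; linarith
        _ = 1 := ENNReal.ofReal_one
    have hev : ∀ᶠ r in 𝓝[>] (0:ℝ), aa < f x r := htend.eventually (eventually_gt_nhds haa1)
    obtain ⟨u, hu, husub⟩ := mem_nhdsGT_iff_exists_Ioo_subset.mp hev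
    have hu0 : 0 < u := hu
    -- produce a small radius with low density
    obtain ⟨y, hyx, hyd, hy⟩ := hP x hx (u / (2 * (1 + ρ))) (by positivity)
    set d : ℝ := dist y x with hdd
    have hd0 : 0 < d := dist_pos.mpr hyx
    set r : ℝ := (1 + ρ) * d with hrdef
    have hr0 : 0 < r := by positivity
    have hru : r < u := by
      rw [hrdef]
      calc (1 + ρ) * d < (1 + ρ) * (u / (2 * (1 + ρ))) := by
            exact mul_lt_mul_of_pos_left hyd (by positivity)
        _ = u / 2 := by field_simp
        _ < u := by linarith
    have hmem : r ∈ Set.Ioo (0:ℝ) u := ⟨hr0, hru⟩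
    have hgt : aa < f x r := husub hmem
    -- but density at r is at most aa
    have hsub : ball y (ρ * d) ⊆ closedBall x r := by
      intro t ht
      rw [mem_ball] at ht
      rw [mem_closedBall]
      have := dist_triangle t y x
      rw [hrdef]; nlinarith
    have hcap : P ∩ closedBall x r ⊆ closedBall x r \ ball y (ρ * d) := by
      intro t ⟨htP, htb⟩
      refine ⟨htb, fun hmem => ?_⟩
      have : t ∈ ball y (ρ * d) ∩ P := ⟨hmem, htP⟩
      rw [hy] at this
      exact this
    have hvol : volume (closedBall x r \ ball y (ρ * d))
        = ENNReal.ofReal (2 * r) - ENNReal.ofReal (2 * (ρ * d)) := by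
      rw [measure_diff hsub measurableSet_ball.nullMeasurableSet
        (by rw [Real.volume_ball]; exact ENNReal.ofReal_ne_top),
        Real.volume_closedBall, Real.volume_ball]
    have hle : f x r ≤ aa := by
      rw [hf]
      simp only
      rw [Real.volume_closedBall]
      apply ENNReal.div_le_of_le_mul
      calc volume (P ∩ closedBall x r) ≤ volume (closedBall x r \ ball y (ρ * d)) :=
            measure_mono hcap
        _ = ENNReal.ofReal (2 * r) - ENNReal.ofReal (2 * (ρ * d)) := hvol
        _ ≤ ENNReal.ofReal (2 * r - 2 * (ρ * d)) := by
            rw [ENNReal.ofReal_sub _ (by nlinarith : (0:ℝ) ≤ 2 * (ρ * d))]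
        _ ≤ aa * ENNReal.ofReal (2 * r) := by
            have hlt1 : ρ / (1 + ρ) < 1 := by
              rw [div_lt_one (by linarith)]; linarith
            rw [haa, ← ENNReal.ofReal_mul (by linarith : (0:ℝ) ≤ 1 - ρ / (1 + ρ))]
            apply ENNReal.ofReal_le_ofReal
            rw [hrdef]
            have h1ρ : (0:ℝ) < 1 + ρ := by linarith
            have e1 : (1 - ρ / (1 + ρ)) * (2 * ((1 + ρ) * d)) = 2 * d := by
              field_simp
              ring
            rw [e1]
            linarith
    exact absurd hle (not_le.mpr hgt)
  have hPsub : P ⊆ {x | ¬ Tendsto (f x) (𝓝[>] 0) (𝓝 1)} := key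
  have h0 : (volume.restrict P) {x | ¬ Tendsto (f x) (𝓝[>] 0) (𝓝 1)} = 0 := by
    rw [← MeasureTheory.ae_iff] at *
    exact hd
  have hfin : volume P ≤ 0 :=
    calc volume P = (volume.restrict P) P := (Measure.restrict_apply_self _ _).symm
      _ ≤ (volume.restrict P) {x | ¬ Tendsto (f x) (𝓝[>] 0) (𝓝 1)} := measure_mono hPsub
      _ = 0 := h0
  exact le_zero_iff.mp hfin

lemma scond_iff (t : ℝ) : Scond t ↔ ∃ p : ℕ × ℕ, t ∈ Sset p.1 p.2 := by
  constructor
  · rintro ⟨hIoo, C, hC, N, hN⟩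
    refine ⟨(⌈C⌉₊, N), hIoo, fun n hn => ?_⟩
    obtain ⟨h1, h2⟩ := hN n hn
    have hCk : C ≤ (⌈C⌉₊ : ℝ) + 1 := by
      have := Nat.le_ceil C; linarith
    have hC0 : 0 < C := by linarith
    exact ⟨le_trans (inv_anti₀ hC0 hCk) h1, by linarith⟩
  · rintro ⟨⟨k, N⟩, hIoo, hN⟩
    have : (0:ℝ) ≤ (k:ℝ) := Nat.cast_nonneg k
    exact ⟨hIoo, (k : ℝ) + 1, by linarith, N, hN⟩


/-- The set `S` is σ-porous in the interval `I = [0,1]` with the Euclidean metric; in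
particular it is meager and has Lebesgue measure zero. -/
theorem stmt6 :
    SigmaPorous {t : Set.Icc (0 : ℝ) 1 | Scond (t : ℝ)} ∧
    IsMeagre {t : Set.Icc (0 : ℝ) 1 | Scond (t : ℝ)} ∧
    MeasureTheory.volume {t : ℝ | Scond t} = 0 := by
  set e : ℕ ≃ ℕ × ℕ := (Denumerable.eqv (ℕ × ℕ)).symm with he
  have hset : {t : Set.Icc (0:ℝ) 1 | Scond (t : ℝ)}
      = ⋃ n : ℕ, {t : Set.Icc (0:ℝ) 1 | (t : ℝ) ∈ Sset (e n).1 (e n).2} := by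
    ext t
    simp only [Set.mem_setOf_eq, Set.mem_iUnion, scond_iff]
    constructor
    · rintro ⟨p, hp⟩
      exact ⟨e.symm p, by simpa using hp⟩
    · rintro ⟨n, hn⟩
      exact ⟨e n, hn⟩
  refine ⟨⟨fun n => {t : Set.Icc (0:ℝ) 1 | (t : ℝ) ∈ Sset (e n).1 (e n).2},
    fun n => porous_Sset_sub _ _, hset⟩, ?_, ?_⟩
  · rw [hset]
    apply isMeagre_iUnion
    intro n
    have hnd := (porous_Sset_sub (e n).1 (e n).2).isNowhereDense
    rw [isMeagre_iff_countable_union_isNowhereDense]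
    refine ⟨{{t : Set.Icc (0:ℝ) 1 | (t : ℝ) ∈ Sset (e n).1 (e n).2}}, ?_,
      Set.countable_singleton _, by simp⟩
    intro s hs
    rw [Set.mem_singleton_iff] at hs
    rw [hs]
    exact hnd
  · have hreal : {t : ℝ | Scond t} = ⋃ p : ℕ × ℕ, Sset p.1 p.2 := by
      ext t
      simp only [Set.mem_setOf_eq, Set.mem_iUnion, scond_iff]
    rw [hreal]
    exact MeasureTheory.measure_iUnion_null fun p => (porous_Sset_real p.1 p.2).volume_zero
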